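/- (Singular value / KAK decomposition of symplectic matrices.) Let d ≥ 1 and let S be a real matrix indexed by (Fin d) ⊕ (Fin d) belonging to the symplectic group (Sᵀ·J·S = J with J = fromBlocks 0 (−1) 1 0). Then there exist matrices U₁, U₂ that are both symplectic and orthogonal (UᵀU = 1), and a function μ : Fin d → ℝ with μ i > 0 for every i, such that S = U₁ · diagonal (Sum.elim μ (fun i => (μ i)⁻¹)) · U₂. -/

import Mathlib

open Matrix Module

section aux
variable {E : Type} [NormedAddCommGroup E] [InnerProductSpace ℝ E]

lemma rip_pos (x : E) (h : x ≠ 0) : (0:ℝ) < inner ℝ x x := by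
  rw [real_inner_self_eq_norm_mul_norm]
  exact mul_pos (norm_pos_iff.2 h) (norm_pos_iff.2 h)

lemma skew_of_iso (Jl : E →ₗ[ℝ] E) (hJ2 : ∀ x, Jl (Jl x) = -x)
    (hiso : ∀ x y : E, (inner ℝ (Jl x) (Jl y) : ℝ) = inner ℝ x y)
    (x y : E) : (inner ℝ x (Jl y) : ℝ) = -inner ℝ (Jl x) y := by
  have h := hiso (Jl x) y
  rw [hJ2 x, inner_neg_left] at h
  linarith

end aux

lemma core (d : ℕ) : ∀ (E : Type) [NormedAddCommGroup E] [InnerProductSpace ℝ E]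
    [FiniteDimensional ℝ E], finrank ℝ E = 2 * d →
    ∀ (Jl f : E →ₗ[ℝ] E),
    (∀ x, Jl (Jl x) = -x) →
    (∀ x y : E, (inner ℝ (Jl x) (Jl y) : ℝ) = inner ℝ x y) →
    f.IsSymmetric →
    (∀ x : E, x ≠ 0 → (0:ℝ) < inner ℝ x (f x)) →
    (∀ x, f (Jl (f x)) = Jl x) →
    ∃ (b : Fin d ⊕ Fin d → E) (μ : Fin d → ℝ),
      Orthonormal ℝ b ∧ (∀ i, b (Sum.inr i) = Jl (b (Sum.inl i))) ∧
      (∀ i, 0 < μ i) ∧ (∀ i, f (b (Sum.inl i)) = μ i • b (Sum.inl i)) ∧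
      (∀ i, f (b (Sum.inr i)) = (μ i)⁻¹ • b (Sum.inr i)) := by
  induction d with
  | zero =>
    intro E _ _ _ _ Jl f _ _ _ _ _
    refine ⟨Sum.elim Fin.elim0 Fin.elim0, Fin.elim0, ?_, ?_, ?_, ?_, ?_⟩ <;>
      first
      | (rw [orthonormal_iff_ite]; rintro (i|i) <;> exact i.elim0)
      | (intro i; exact i.elim0)
  | succ d ih =>
    intro E _ _ _ hdim Jl f hJ2 hiso hsym hpos hfJf
    have hskew : ∀ x y : E, (inner ℝ x (Jl y) : ℝ) = -inner ℝ (Jl x) y :=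
      skew_of_iso Jl hJ2 hiso
    have : Nontrivial E := Module.nontrivial_of_finrank_pos (R := ℝ) (by omega)
    -- find an eigenvector
    let T := LinearMap.toContinuousLinearMap f
    have hT : LinearMap.IsSymmetric (↑T : E →ₗ[ℝ] E) := by
      rwa [LinearMap.coe_toContinuousLinearMap]
    obtain ⟨v, hv⟩ := hT.hasEigenvalue_iSup_of_finiteDimensional.exists_hasEigenvector
    set lam : ℝ := (⨆ x : { x : E // x ≠ 0 }, RCLike.re (inner ℝ (T x) x : ℝ) / ‖(x : E)‖ ^ 2 : ℝ)
      with hlam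
    have hvne : v ≠ 0 := hv.right
    have hfv : f v = lam • v := by
      have h := hv.apply_eq_smul
      rwa [show (↑T : E →ₗ[ℝ] E) v = f v from by
        rw [LinearMap.coe_toContinuousLinearMap]] at h
    have hlampos : 0 < lam := by
      have h1 : (0:ℝ) < inner ℝ v (f v) := hpos v hvne
      rw [hfv, real_inner_smul_right] at h1
      have h2 : (0:ℝ) < inner ℝ v v := rip_pos v hvne
      nlinarith
    have hlamne : lam ≠ 0 := ne_of_gt hlampos
    -- normalize
    set u : E := ‖v‖⁻¹ • v with hu
    have hnu : ‖u‖ = 1 := norm_smul_inv_norm hvne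
    have hune : u ≠ 0 := by
      intro h; rw [h, norm_zero] at hnu; norm_num at hnu
    have hfu : f u = lam • u := by
      rw [hu, LinearMap.map_smul, hfv]; exact smul_comm _ _ _
    set w : E := Jl u with hwdef
    have hfw : f w = lam⁻¹ • w := by
      have h := hfJf u
      rw [hfu, LinearMap.map_smul, LinearMap.map_smul] at h
      calc f w = lam⁻¹ • (lam • f w) := by
              rw [smul_smul, inv_mul_cancel₀ hlamne, one_smul]
        _ = lam⁻¹ • w := by rw [h]
    have huu : (inner ℝ u u : ℝ) = 1 := by
      rw [real_inner_self_eq_norm_mul_norm, hnu]; norm_num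
    have hww : (inner ℝ w w : ℝ) = 1 := by rw [hwdef, hiso, huu]
    have hnw : ‖w‖ = 1 := by
      have h := real_inner_self_eq_norm_mul_norm w
      rw [hww] at h
      nlinarith [norm_nonneg w]
    have hwne : w ≠ 0 := by
      intro h; rw [h, norm_zero] at hnw; norm_num at hnw
    have huw : (inner ℝ u w : ℝ) = 0 := by
      have h := hskew u u
      rw [real_inner_comm u (Jl u)] at h
      rw [hwdef]
      linarith
    have hwu : (inner ℝ w u : ℝ) = 0 := by rw [real_inner_comm, huw]
    -- the orthogonal complement
    set K : Submodule ℝ E := (ℝ ∙ u)ᗮ ⊓ (ℝ ∙ w)ᗮ with hK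
    have hmem : ∀ x : E, x ∈ K ↔ (inner ℝ u x : ℝ) = 0 ∧ (inner ℝ w x : ℝ) = 0 := by
      intro x
      rw [hK, Submodule.mem_inf, Submodule.mem_orthogonal_singleton_iff_inner_right,
        Submodule.mem_orthogonal_singleton_iff_inner_right]
    have hdimK : finrank ℝ K = 2 * d := by
      have h1 : finrank ℝ (ℝ ∙ u) = 1 := finrank_span_singleton hune
      have h2 : finrank ℝ (ℝ ∙ w) = 1 := finrank_span_singleton hwne
      have hdisj : (ℝ ∙ u) ⊓ (ℝ ∙ w) = ⊥ := by
        rw [eq_bot_iff]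
        rintro x ⟨hx1, hx2⟩
        obtain ⟨a, rfl⟩ := Submodule.mem_span_singleton.1 hx1
        obtain ⟨c, hc⟩ := Submodule.mem_span_singleton.1 hx2
        have h3 : (inner ℝ u (a • u) : ℝ) = a := by rw [real_inner_smul_right, huu, mul_one]
        have h4 : (inner ℝ u (c • w) : ℝ) = 0 := by rw [real_inner_smul_right, huw, mul_zero]
        rw [hc, h3] at h4
        rw [Submodule.mem_bot, h4, zero_smul]
      have h5 : finrank ℝ ((ℝ ∙ u) ⊔ (ℝ ∙ w) : Submodule ℝ E) = 2 := by
        have := Submodule.finrank_sup_add_finrank_inf_eq (ℝ ∙ u) (ℝ ∙ w)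
        rw [h1, h2, hdisj, finrank_bot] at this
        omega
      have h6 := Submodule.finrank_add_finrank_orthogonal ((ℝ ∙ u) ⊔ (ℝ ∙ w) : Submodule ℝ E)
      rw [hK, Submodule.inf_orthogonal]
      rw [h5, hdim] at h6
      omega
    -- invariance
    have hfK : ∀ x ∈ K, f x ∈ K := by
      intro x hx
      obtain ⟨h1, h2⟩ := (hmem x).1 hx
      rw [hmem]
      constructor
      · have h := hsym u x
        rw [hfu, real_inner_smul_left, h1, mul_zero] at h
        exact h.symm
      · have h := hsym w x
        rw [hfw, real_inner_smul_left, h2, mul_zero] at h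
        exact h.symm
    have hJK : ∀ x ∈ K, Jl x ∈ K := by
      intro x hx
      obtain ⟨h1, h2⟩ := (hmem x).1 hx
      rw [hmem]
      refine ⟨?_, ?_⟩
      · have h2' : (inner ℝ (Jl u) x : ℝ) = 0 := by rw [← hwdef]; exact h2
        rw [hskew u x, h2', neg_zero]
      · rw [hwdef, hiso, h1]
    -- restrictions
    set f' : K →ₗ[ℝ] K := f.restrict hfK with hf'
    set J' : K →ₗ[ℝ] K := Jl.restrict hJK with hJ'
    have hco : ∀ x : K, (↑(f' x) : E) = f ↑x := fun x => rfl
    have hcoJ : ∀ x : K, (↑(J' x) : E) = Jl ↑x := fun x => rfl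
    have hinnerK : ∀ x y : K, (inner ℝ x y : ℝ) = inner ℝ (↑x : E) ↑y := fun x y => rfl
    obtain ⟨b', μ', hb'on, hb'J, hμ'pos, hb'l, hb'r⟩ :=
      ih K hdimK J' f'
        (fun x => Subtype.ext (by rw [hcoJ, hcoJ, hJ2]; rfl))
        (fun x y => by rw [hinnerK, hinnerK, hcoJ, hcoJ, hiso])
        (fun x y => by rw [hinnerK, hinnerK, hco, hco]; exact hsym _ _)
        (fun x hx => by
          rw [hinnerK, hco]
          exact hpos _ (fun h => hx (Subtype.ext h)))
        (fun x => Subtype.ext (by rw [hco, hcoJ, hco, hcoJ, hfJf]))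
    have hcu : ∀ x : K, (inner ℝ u (↑x : E) : ℝ) = 0 := fun x => ((hmem ↑x).1 x.2).1
    have hcw : ∀ x : K, (inner ℝ w (↑x : E) : ℝ) = 0 := fun x => ((hmem ↑x).1 x.2).2
    have hcu' : ∀ x : K, (inner ℝ (↑x : E) u : ℝ) = 0 := fun x => by
      rw [real_inner_comm]; exact hcu x
    have hcw' : ∀ x : K, (inner ℝ (↑x : E) w : ℝ) = 0 := fun x => by
      rw [real_inner_comm]; exact hcw x
    have hb'ite : ∀ a c, (inner ℝ (↑(b' a) : E) ↑(b' c) : ℝ) = if a = c then 1 else 0 :=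
      fun a c => by rw [← hinnerK]; exact orthonormal_iff_ite.1 hb'on a c
    -- assemble
    refine ⟨Sum.elim (Fin.cons u fun i => ↑(b' (Sum.inl i)))
        (Fin.cons w fun i => ↑(b' (Sum.inr i))), Fin.cons lam μ', ?_, ?_, ?_, ?_, ?_⟩
    · rw [orthonormal_iff_ite]
      rintro (i | i) (j | j) <;>
        induction i using Fin.cases <;> induction j using Fin.cases <;>
        simp [huu, hww, hnu, hnw, huw, hwu, hcu, hcw, hcu', hcw', hb'ite, Fin.succ_ne_zero,
          (Fin.succ_ne_zero _).symm, Fin.succ_inj]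
    · intro i
      induction i using Fin.cases with
      | zero => simp [hwdef]
      | succ i =>
        simp only [Sum.elim_inl, Sum.elim_inr, Fin.cons_succ]
        rw [hb'J i, hcoJ]
    · intro i
      induction i using Fin.cases with
      | zero => simpa using hlampos
      | succ i => simpa using hμ'pos i
    · intro i
      induction i using Fin.cases with
      | zero => simpa using hfu
      | succ i =>
        simp only [Sum.elim_inl, Fin.cons_succ]
        rw [← hco, hb'l i]; rfl
    · intro i
      induction i using Fin.cases with
      | zero => simpa using hfw
      | succ i =>
        simp only [Sum.elim_inr, Fin.cons_succ]
        rw [← hco, hb'r i]; rfl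

section matr
variable {d : ℕ}
local notation "n" => (Fin d ⊕ Fin d)
local notation "E" => EuclideanSpace ℝ (Fin d ⊕ Fin d)

noncomputable def mvl (A : Matrix (Fin d ⊕ Fin d) (Fin d ⊕ Fin d) ℝ) :
    EuclideanSpace ℝ (Fin d ⊕ Fin d) →ₗ[ℝ] EuclideanSpace ℝ (Fin d ⊕ Fin d) :=
  Matrix.toEuclideanLin A

lemma mvl_apply (A : Matrix n n ℝ) (x : E) (i : n) : mvl A x i = A.mulVec x i := rfl

lemma mvl_mvl (A B : Matrix n n ℝ) (x : E) : mvl A (mvl B x) = mvl (A * B) x := by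
  show WithLp.toLp 2 (A.mulVec (B.mulVec x)) = WithLp.toLp 2 ((A * B).mulVec x)
  rw [Matrix.mulVec_mulVec]

lemma mvl_one (x : E) : mvl (1 : Matrix n n ℝ) x = x := by
  show WithLp.toLp 2 ((1 : Matrix n n ℝ).mulVec x) = x
  rw [Matrix.one_mulVec]

lemma mvl_neg_one (x : E) : mvl (-1 : Matrix n n ℝ) x = -x := by
  show WithLp.toLp 2 ((-1 : Matrix n n ℝ).mulVec x) = -x
  rw [Matrix.neg_mulVec, Matrix.one_mulVec, WithLp.toLp_neg, WithLp.toLp_ofLp]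

lemma inner_mvl (M : Matrix n n ℝ) (x y : E) :
    (inner ℝ (mvl M x) y : ℝ) = inner ℝ x (mvl Mᵀ y) := by
  simp only [PiLp.inner_apply, RCLike.inner_apply, conj_trivial]
  show ∑ i, y i * (M.mulVec x i) = ∑ i, (Mᵀ.mulVec y i) * x i
  simp only [mulVec, dotProduct, transpose_apply, Finset.sum_mul, Finset.mul_sum]
  rw [Finset.sum_comm]
  exact Finset.sum_congr rfl fun i _ => Finset.sum_congr rfl fun j _ => by ring

lemma diag_symplectic (μ : Fin d → ℝ) (hμ : ∀ i, μ i ≠ 0) :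
    Matrix.diagonal (Sum.elim μ fun i => (μ i)⁻¹) ∈ Matrix.symplecticGroup (Fin d) ℝ := by
  rw [SymplecticGroup.mem_iff']
  rw [Matrix.diagonal_transpose]
  ext x y
  rw [Matrix.mul_diagonal, Matrix.diagonal_mul]
  rcases x with i | i <;> rcases y with j | j <;> by_cases h : i = j <;>
    simp [Matrix.J, Matrix.fromBlocks, Matrix.one_apply, h, hμ] <;>
    field_simp [hμ]

end matr
lemma sym_diag (d : ℕ) (A : Matrix (Fin d ⊕ Fin d) (Fin d ⊕ Fin d) ℝ) (hAT : Aᵀ = A)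
    (hAJA : A * Matrix.J (Fin d) ℝ * A = Matrix.J (Fin d) ℝ)
    (hpos : ∀ x : EuclideanSpace ℝ (Fin d ⊕ Fin d), x ≠ 0 → (0:ℝ) < inner ℝ x (mvl A x)) :
    ∃ W : Matrix (Fin d ⊕ Fin d) (Fin d ⊕ Fin d) ℝ,
      W ∈ Matrix.symplecticGroup (Fin d) ℝ ∧ Wᵀ * W = 1 ∧ W * Wᵀ = 1 ∧
      ∃ ν : Fin d → ℝ, (∀ i, 0 < ν i) ∧
        A = W * Matrix.diagonal (Sum.elim ν fun i => (ν i)⁻¹) * Wᵀ := by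
  have hdim : finrank ℝ (EuclideanSpace ℝ (Fin d ⊕ Fin d)) = 2 * d := by
    simp [finrank_euclideanSpace]
    ring
  obtain ⟨b, ν, hbon, hbJ, hν, hbl, hbr⟩ :=
    core d (EuclideanSpace ℝ (Fin d ⊕ Fin d)) hdim (mvl (Matrix.J (Fin d) ℝ)) (mvl A)
      (fun x => by rw [mvl_mvl, Matrix.J_squared, mvl_neg_one])
      (fun x y => by
        rw [inner_mvl, mvl_mvl, Matrix.J_transpose,
          show -Matrix.J (Fin d) ℝ * Matrix.J (Fin d) ℝ = 1 from by
            rw [Matrix.neg_mul, Matrix.J_squared, neg_neg],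
          mvl_one])
      (fun x y => by rw [inner_mvl, hAT])
      hpos
      (fun x => by
        rw [mvl_mvl, mvl_mvl]
        rw [congrArg mvl hAJA])
  have hbite := orthonormal_iff_ite.1 hbon
  set W : Matrix (Fin d ⊕ Fin d) (Fin d ⊕ Fin d) ℝ := Matrix.of (fun x y => b y x) with hW
  have hentry : ∀ (M : Matrix (Fin d ⊕ Fin d) (Fin d ⊕ Fin d) ℝ) (y z : Fin d ⊕ Fin d),
      (Wᵀ * M * W) y z = (inner ℝ (b y) (mvl M (b z)) : ℝ) := by
    intro M y z
    rw [Matrix.mul_assoc, Matrix.mul_apply]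
    simp only [PiLp.inner_apply, RCLike.inner_apply, conj_trivial, Matrix.transpose_apply,
      Matrix.mul_apply, hW, Matrix.of_apply, mvl_apply, Matrix.mulVec, dotProduct]
    exact Finset.sum_congr rfl fun x _ => mul_comm _ _
  have hinnerb : ∀ y z, (inner ℝ (b y) (b z) : ℝ) = if y = z then 1 else 0 := hbite
  have hWtW : Wᵀ * W = 1 := by
    ext y z
    have h := hinnerb y z
    simp only [PiLp.inner_apply, RCLike.inner_apply, conj_trivial] at h
    rw [Matrix.mul_apply, Matrix.one_apply]
    simpa [hW, mul_comm] using h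
  have hWWt : W * Wᵀ = 1 := mul_eq_one_comm.mp hWtW
  set D := Matrix.diagonal (Sum.elim ν fun i => (ν i)⁻¹) with hD
  have hWAW : Wᵀ * A * W = D := by
    ext y z
    rw [hentry A y z, hD, Matrix.diagonal_apply]
    rcases z with j | j
    · rw [hbl j, real_inner_smul_right, hinnerb]
      rcases eq_or_ne y (Sum.inl j) with rfl | h
      · simp
      · simp [h]
    · rw [hbr j, real_inner_smul_right, hinnerb]
      rcases eq_or_ne y (Sum.inr j) with rfl | h
      · simp
      · simp [h]
  have hWsymp : W ∈ Matrix.symplecticGroup (Fin d) ℝ := by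
    rw [SymplecticGroup.mem_iff']
    ext y z
    rw [hentry (Matrix.J (Fin d) ℝ) y z]
    rcases z with j | j
    · rw [show mvl (Matrix.J (Fin d) ℝ) (b (Sum.inl j)) = b (Sum.inr j) from (hbJ j).symm,
        hinnerb]
      rcases y with i | i <;>
        simp [Matrix.J, Matrix.fromBlocks, Matrix.one_apply, Sum.inr.injEq, eq_comm]
    · have h2 : mvl (Matrix.J (Fin d) ℝ) (b (Sum.inr j)) = -(b (Sum.inl j)) := by
        rw [hbJ j, mvl_mvl, Matrix.J_squared, mvl_neg_one]
      rw [h2, inner_neg_right, hinnerb]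
      rcases y with i | i <;>
        simp [Matrix.J, Matrix.fromBlocks, Matrix.one_apply, eq_comm]
  refine ⟨W, hWsymp, hWtW, hWWt, ν, hν, ?_⟩
  calc A = (W * Wᵀ) * A * (W * Wᵀ) := by rw [hWWt]; simp
    _ = W * (Wᵀ * A * W) * Wᵀ := by simp only [Matrix.mul_assoc]
    _ = W * D * Wᵀ := by rw [hWAW]
/-- KAK (singular value) decomposition of a symplectic matrix: `S = U₁ D U₂` with `U₁, U₂`
symplectic and orthogonal, and `D` diagonal with entries `μᵢ, μᵢ⁻¹`, `μᵢ > 0`. -/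
theorem symplectic_KAK_decomposition
    (d : ℕ) (hd : 1 ≤ d) (S : Matrix (Fin d ⊕ Fin d) (Fin d ⊕ Fin d) ℝ)
    (hS : S ∈ Matrix.symplecticGroup (Fin d) ℝ) :
    ∃ U₁ ∈ Matrix.symplecticGroup (Fin d) ℝ, ∃ U₂ ∈ Matrix.symplecticGroup (Fin d) ℝ,
      U₁ᵀ * U₁ = 1 ∧ U₂ᵀ * U₂ = 1 ∧
      ∃ μ : Fin d → ℝ, (∀ i, 0 < μ i) ∧
        S = U₁ * Matrix.diagonal (Sum.elim μ (fun i => (μ i)⁻¹)) * U₂ := by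
  have hST : Sᵀ ∈ Matrix.symplecticGroup (Fin d) ℝ := SymplecticGroup.transpose_mem hS
  set A := Sᵀ * S with hA
  have hAT : Aᵀ = A := by rw [hA, Matrix.transpose_mul, Matrix.transpose_transpose]
  have hAG : A ∈ Matrix.symplecticGroup (Fin d) ℝ := mul_mem hST hS
  have hAJA : A * Matrix.J (Fin d) ℝ * A = Matrix.J (Fin d) ℝ := by
    have h := (SymplecticGroup.mem_iff').1 hAG
    rwa [hAT] at h
  have hdet : IsUnit S.det := SymplecticGroup.symplectic_det hS
  have hSinv : S⁻¹ * S = 1 := Matrix.nonsing_inv_mul S hdet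
  have hSinj : ∀ x : EuclideanSpace ℝ (Fin d ⊕ Fin d), mvl S x = 0 → x = 0 := by
    intro x h
    have h2 : mvl S⁻¹ (mvl S x) = mvl S⁻¹ 0 := by rw [h]
    rwa [mvl_mvl, hSinv, mvl_one, map_zero] at h2
  have hpos : ∀ x : EuclideanSpace ℝ (Fin d ⊕ Fin d), x ≠ 0 → (0:ℝ) < inner ℝ x (mvl A x) := by
    intro x hx
    have h1 : (inner ℝ (mvl S x) (mvl S x) : ℝ) = inner ℝ x (mvl A x) := by
      rw [inner_mvl, mvl_mvl]
    rw [← h1]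
    exact rip_pos _ (fun h => hx (hSinj x h))
  obtain ⟨W, hWG, hWtW, hWWt, ν, hν, hAeq⟩ := sym_diag d A hAT hAJA hpos
  set μ := fun i => Real.sqrt (ν i) with hμ
  have hμpos : ∀ i, 0 < μ i := fun i => Real.sqrt_pos.2 (hν i)
  have hμne : ∀ i, μ i ≠ 0 := fun i => ne_of_gt (hμpos i)
  have hνμ : ∀ i, ν i = μ i * μ i := fun i =>
    (Real.mul_self_sqrt (le_of_lt (hν i))).symm
  set D := Matrix.diagonal (Sum.elim μ fun i => (μ i)⁻¹) with hD
  set Dinv := Matrix.diagonal (Sum.elim (fun i => (μ i)⁻¹) fun i => ((μ i)⁻¹)⁻¹) with hDinv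
  set DD := Matrix.diagonal (Sum.elim ν fun i => (ν i)⁻¹) with hDD
  have hDG : D ∈ Matrix.symplecticGroup (Fin d) ℝ := diag_symplectic μ hμne
  have hDinvG : Dinv ∈ Matrix.symplecticGroup (Fin d) ℝ :=
    diag_symplectic (fun i => (μ i)⁻¹) (fun i => inv_ne_zero (hμne i))
  have hDinvT : Dinvᵀ = Dinv := Matrix.diagonal_transpose _
  have hDinvD : Dinv * D = 1 := by
    rw [hDinv, hD, Matrix.diagonal_mul_diagonal]
    refine (congrArg Matrix.diagonal ?_).trans Matrix.diagonal_one
    funext x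
    rcases x with i | i <;>
      simp only [Pi.mul_apply, Pi.one_apply, Sum.elim_inl, Sum.elim_inr, inv_inv] <;>
      field_simp [hμne i]
  have hDDD : Dinv * (DD * Dinv) = 1 := by
    rw [hDinv, hDD, Matrix.diagonal_mul_diagonal, Matrix.diagonal_mul_diagonal]
    refine (congrArg Matrix.diagonal ?_).trans Matrix.diagonal_one
    funext x
    rcases x with i | i <;>
      simp only [Pi.mul_apply, Pi.one_apply, Sum.elim_inl, Sum.elim_inr, inv_inv, hνμ i] <;>
      field_simp [hμne i]
  have hWW : ∀ X, Wᵀ * (W * X) = X := fun X => by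
    rw [← Matrix.mul_assoc, hWtW, Matrix.one_mul]
  set U₁ := S * W * Dinv with hU₁
  refine ⟨U₁, mul_mem (mul_mem hS hWG) hDinvG, Wᵀ, SymplecticGroup.transpose_mem hWG,
    ?_, ?_, μ, hμpos, ?_⟩
  · have h1 : U₁ᵀ * U₁ = Dinv * (Wᵀ * (Sᵀ * (S * (W * Dinv)))) := by
      rw [hU₁]
      simp only [Matrix.transpose_mul, hDinvT, Matrix.mul_assoc]
    have h2 : Sᵀ * (S * (W * Dinv)) = A * (W * Dinv) := by
      rw [hA, Matrix.mul_assoc]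
    have h3 : A * (W * Dinv) = W * (DD * (Wᵀ * (W * Dinv))) := by
      rw [hAeq]
      simp only [Matrix.mul_assoc]
    rw [h1, h2, h3, hWW, hWW, hDDD]
  · rw [Matrix.transpose_transpose, hWWt]
  · have h4 : U₁ * Matrix.diagonal (Sum.elim μ fun i => (μ i)⁻¹) * Wᵀ
        = S * (W * ((Dinv * D) * Wᵀ)) := by
      rw [hU₁, ← hD]
      simp only [Matrix.mul_assoc]
    rw [h4, hDinvD, Matrix.one_mul, ← Matrix.mul_assoc, Matrix.mul_assoc S W Wᵀ, hWWt,
      Matrix.mul_one]
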